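/- Let Z = m₁(P×Q₁) + ⋯ + m_b(P×Q_b) be a fat point scheme in ℙ¹×ℙ¹ all of whose points have the same first coordinate, with defining ideal I_Z = ⋂_{j=1}^b (L, R_j)^{m_j}, where L is a (1,0)-form, R₁,…,R_b are pairwise non-proportional (0,1)-forms, and m_j ≥ 1 for all j. Fix i ∈ {1,…,b}, let Z' be the scheme with m_i replaced by m_i − 1, and set b_ℓ = Σ_{p=1}^b (m_p − ℓ)_+ for ℓ = 0,…,m_i − 1. For each such ℓ, the explicit form F_ℓ := L^ℓ · R_i^{m_i − ℓ − 1} · Π_{p≠i} R_p^{(m_p − ℓ)_+} is bihomogeneous of bidegree (ℓ, b_ℓ − 1), lies in I_{Z'}, and does not lie in I_Z; that is, F_ℓ is a separator of P×Q_i of multiplicity m_i of bidegree (ℓ, b_ℓ − 1). -/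

import Mathlib

open MvPolynomial

/-- `F` is bihomogeneous of bidegree `(c, d)` in `k[x₀,x₁,y₀,y₁]`, where the variables are
indexed by `Fin 4` with `x₀ = X 0`, `x₁ = X 1`, `y₀ = X 2`, `y₁ = X 3`. -/
def IsBihom {k : Type*} [CommSemiring k] (c d : ℕ) (F : MvPolynomial (Fin 4) k) : Prop :=
  ∀ s ∈ F.support, s 0 + s 1 = c ∧ s 2 + s 3 = d

/-- Two polynomials are non-proportional: neither is a scalar multiple of the other. -/
def NonPropPoly {k : Type*} [CommSemiring k] (F G : MvPolynomial (Fin 4) k) : Prop :=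
  (∀ c : k, F ≠ c • G) ∧ (∀ c : k, G ≠ c • F)

lemma IsBihom.mul {k : Type*} [CommSemiring k] {c d c' d' : ℕ}
    {F G : MvPolynomial (Fin 4) k} (hF : IsBihom c d F) (hG : IsBihom c' d' G) :
    IsBihom (c + c') (d + d') (F * G) := by
  intro s hs
  obtain ⟨u, hu, v, hv, rfl⟩ := Finset.mem_add.mp (MvPolynomial.support_mul F G hs)
  obtain ⟨h1, h2⟩ := hF u hu
  obtain ⟨h3, h4⟩ := hG v hv
  simp only [Finsupp.add_apply]
  omega

lemma IsBihom.pow {k : Type*} [CommSemiring k] {c d : ℕ}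
    {F : MvPolynomial (Fin 4) k} (hF : IsBihom c d F) (n : ℕ) :
    IsBihom (n * c) (n * d) (F ^ n) := by
  induction n with
  | zero =>
    intro s hs
    simp only [pow_zero] at hs
    rcases Finset.mem_of_subset (support_monomial_subset (R:=k)) hs with h
    simp only [Finset.mem_singleton] at h
    subst h; simp
  | succ n ih =>
    have := ih.mul hF
    rw [pow_succ]
    simpa [Nat.succ_mul] using this

lemma IsBihom.prod {k : Type*} [CommSemiring k] {ι : Type*} (t : Finset ι)
    (c d : ι → ℕ) (F : ι → MvPolynomial (Fin 4) k) (h : ∀ p ∈ t, IsBihom (c p) (d p) (F p)) :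
    IsBihom (∑ p ∈ t, c p) (∑ p ∈ t, d p) (∏ p ∈ t, F p) := by
  classical
  induction t using Finset.induction_on with
  | empty =>
    intro s hs
    simp only [Finset.prod_empty] at hs
    have := Finset.mem_of_subset (support_monomial_subset (R:=k) (s:=0) (a:=(1:k)))
      (by simpa using hs)
    simp only [Finset.mem_singleton] at this
    subst this; simp
  | insert a t' ha ih =>
    rw [Finset.prod_insert ha, Finset.sum_insert ha, Finset.sum_insert ha]
    exact (h a (Finset.mem_insert_self a t')).mul (ih fun p hp => h p (Finset.mem_insert_of_mem hp))

lemma fin4_single (s : Fin 4 →₀ ℕ) (j : Fin 4) (h : ∀ j', j' ≠ j → s j' = 0) :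
    s = Finsupp.single j (s j) := by
  ext j'
  rcases eq_or_ne j' j with rfl | hne
  · simp
  · rw [h j' hne, Finsupp.single_apply, if_neg (by exact fun hh => hne hh.symm)]

lemma exists_lin_x {k : Type*} [CommSemiring k] {L : MvPolynomial (Fin 4) k}
    (h : IsBihom 1 0 L) :
    L = C (coeff (Finsupp.single 0 1) L) * X 0 + C (coeff (Finsupp.single 1 1) L) * X 1 := by
  ext s
  rw [coeff_add, coeff_C_mul, coeff_C_mul, coeff_X', coeff_X']
  by_cases h0 : (Finsupp.single (0:Fin 4) 1) = s
  · have : ¬ (Finsupp.single (1:Fin 4) 1) = s := by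
      rw [← h0]; intro hc
      have := DFunLike.congr_fun hc (0:Fin 4)
      simp [Finsupp.single_apply] at this
    subst h0
    simp [this]
  · by_cases h1 : (Finsupp.single (1:Fin 4) 1) = s
    · subst h1; simp [h0]
    · rw [if_neg h0, if_neg h1]
      by_contra hc
      rw [mul_zero, mul_zero, add_zero] at hc
      have hs : s ∈ L.support := by simpa [mem_support_iff] using hc
      obtain ⟨ha, hb⟩ := h s hs
      have h2 : s 2 = 0 := by omega
      have h3 : s 3 = 0 := by omega
      rcases (by omega : s 0 = 1 ∧ s 1 = 0 ∨ s 0 = 0 ∧ s 1 = 1) with ⟨e0, e1⟩ | ⟨e0, e1⟩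
      · apply h0
        rw [← e0]
        exact (fin4_single s 0 (by intro j' hj'; fin_cases j' <;> simp_all)).symm
      · apply h1
        rw [← e1]
        exact (fin4_single s 1 (by intro j' hj'; fin_cases j' <;> simp_all)).symm

lemma exists_lin_y {k : Type*} [CommSemiring k] {L : MvPolynomial (Fin 4) k}
    (h : IsBihom 0 1 L) :
    L = C (coeff (Finsupp.single 2 1) L) * X 2 + C (coeff (Finsupp.single 3 1) L) * X 3 := by
  ext s
  rw [coeff_add, coeff_C_mul, coeff_C_mul, coeff_X', coeff_X']
  by_cases h0 : (Finsupp.single (2:Fin 4) 1) = s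
  · have : ¬ (Finsupp.single (3:Fin 4) 1) = s := by
      rw [← h0]; intro hc
      have := DFunLike.congr_fun hc (2:Fin 4)
      simp [Finsupp.single_apply] at this
    subst h0
    simp [this]
  · by_cases h1 : (Finsupp.single (3:Fin 4) 1) = s
    · subst h1; simp [h0]
    · rw [if_neg h0, if_neg h1]
      by_contra hc
      rw [mul_zero, mul_zero, add_zero] at hc
      have hs : s ∈ L.support := by simpa [mem_support_iff] using hc
      obtain ⟨ha, hb⟩ := h s hs
      have h2 : s 0 = 0 := by omega
      have h3 : s 1 = 0 := by omega
      rcases (by omega : s 2 = 1 ∧ s 3 = 0 ∨ s 2 = 0 ∧ s 3 = 1) with ⟨e0, e1⟩ | ⟨e0, e1⟩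
      · apply h0
        rw [← e0]
        exact (fin4_single s 2 (by intro j' hj'; fin_cases j' <;> simp_all)).symm
      · apply h1
        rw [← e1]
        exact (fin4_single s 3 (by intro j' hj'; fin_cases j' <;> simp_all)).symm

/-- The ideal of polynomials in `k[s,t]` all of whose monomials have total degree ≥ n. -/
def ordIdeal (k : Type*) [Field k] (n : ℕ) : Ideal (MvPolynomial (Fin 2) k) where
  carrier := {G | ∀ s ∈ G.support, n ≤ s 0 + s 1}
  zero_mem' := by intro s hs; simp at hs
  add_mem' := by
    intro a b ha hb s hs
    rcases Finset.mem_union.mp (MvPolynomial.support_add hs) with h | h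
    · exact ha s h
    · exact hb s h
  smul_mem' := by
    intro c G hG s hs
    simp only [smul_eq_mul] at hs
    obtain ⟨u, hu, v, hv, rfl⟩ := Finset.mem_add.mp (MvPolynomial.support_mul c G hs)
    have := hG v hv
    simp only [Finsupp.add_apply]
    omega

lemma pow_le_ordIdeal {k : Type*} [Field k] (n : ℕ) :
    (Ideal.span {(X 0 : MvPolynomial (Fin 2) k), X 1}) ^ n ≤ ordIdeal k n := by
  induction n with
  | zero => intro p _ s hs; simp
  | succ n ih =>
    rw [pow_succ]
    refine Ideal.mul_le.mpr fun r hr s hs => ?_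
    intro u hu
    obtain ⟨v, hv, w, hw, rfl⟩ := Finset.mem_add.mp (MvPolynomial.support_mul r s hu)
    have h1 := ih hr v hv
    have h2 : 1 ≤ w 0 + w 1 := by
      have hs1 : s ∈ ordIdeal k 1 := by
        revert hs
        have : Ideal.span {(X 0 : MvPolynomial (Fin 2) k), X 1} ≤ ordIdeal k 1 := by
          rw [Ideal.span_le]
          rintro p (rfl | rfl) <;>
          · intro u hu
            rw [support_X] at hu
            rcases Finset.mem_singleton.mp hu with rfl
            simp
        exact fun hs => this hs
      exact hs1 w hw
    simp only [Finsupp.add_apply]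
    omega

lemma exists_comp {k : Type*} [Field k] {γ δ : k} (h : ¬(γ = 0 ∧ δ = 0)) :
    ∃ a c e f : k, γ*a + δ*c = 1 ∧ γ*e + δ*f = 0 ∧ a*f - c*e ≠ 0 := by
  by_cases hγ : γ = 0
  · have hδ : δ ≠ 0 := fun hd => h ⟨hγ, hd⟩
    exact ⟨0, δ⁻¹, 1, 0, by simp [hγ, hδ], by simp [hγ], by simp [hδ]⟩
  · exact ⟨γ⁻¹, 0, -δ*γ⁻¹, 1, by simp [hγ], by field_simp; ring, by simp [hγ]⟩

lemma prop_of_const_zero {k : Type*} [Field k] {γ δ a c e f γp δp : k}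
    (h1 : γ*a + δ*c = 1) (h0 : γ*e + δ*f = 0) (hdet : a*f - c*e ≠ 0)
    (hp : γp*e + δp*f = 0) : ∃ u : k, γp = u * γ ∧ δp = u * δ := by
  have hD : γ*δp - γp*δ = 0 := by
    by_contra hD
    have he : (γ*δp - γp*δ) * e = 0 := by linear_combination δp * h0 - δ * hp
    have hf : (γ*δp - γp*δ) * f = 0 := by linear_combination γ * hp - γp * h0
    have he' : e = 0 := by
      rcases mul_eq_zero.mp he with h | h
      · exact absurd h hD
      · exact h
    have hf' : f = 0 := by
      rcases mul_eq_zero.mp hf with h | h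
      · exact absurd h hD
      · exact h
    exact hdet (by rw [he', hf']; ring)
  refine ⟨γp*a + δp*c, ?_, ?_⟩
  · linear_combination (-γp) * h1 - c * hD
  · linear_combination (-δp) * h1 + a * hD

theorem explicit_separator_points_on_a_line
    {k : Type*} [Field k] [IsAlgClosed k] [CharZero k]
    (b : ℕ) (hb : 0 < b)
    (L : MvPolynomial (Fin 4) k) (hL0 : L ≠ 0) (hLdeg : IsBihom 1 0 L)
    (R : Fin b → MvPolynomial (Fin 4) k)
    (hR0 : ∀ j, R j ≠ 0) (hRdeg : ∀ j, IsBihom 0 1 (R j))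
    (hRnp : ∀ j j', j ≠ j' → NonPropPoly (R j) (R j'))
    (m : Fin b → ℕ) (hm : ∀ j, 1 ≤ m j)
    (i : Fin b) (ℓ : ℕ) (hℓ : ℓ < m i) :
    IsBihom ℓ ((∑ p, (m p - ℓ)) - 1)
      (L ^ ℓ * R i ^ (m i - ℓ - 1) * ∏ p ∈ Finset.univ.erase i, R p ^ (m p - ℓ)) ∧
    (L ^ ℓ * R i ^ (m i - ℓ - 1) * ∏ p ∈ Finset.univ.erase i, R p ^ (m p - ℓ)) ∈
      (⨅ j, (Ideal.span {L, R j}) ^ (if j = i then m i - 1 else m j)) ∧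
    (L ^ ℓ * R i ^ (m i - ℓ - 1) * ∏ p ∈ Finset.univ.erase i, R p ^ (m p - ℓ)) ∉
      (⨅ j, (Ideal.span {L, R j}) ^ m j) := by
  refine ⟨?_, ?_, ?_⟩
  -- Part 1: bihomogeneity
  · have h1 := ((hLdeg.pow ℓ).mul ((hRdeg i).pow (m i - ℓ - 1))).mul
      (IsBihom.prod (Finset.univ.erase i) (fun p => (m p - ℓ) * 0) (fun p => (m p - ℓ) * 1)
        (fun p => R p ^ (m p - ℓ)) (fun p _ => (hRdeg p).pow (m p - ℓ)))
    have hsum : (m i - ℓ) + ∑ p ∈ Finset.univ.erase i, (m p - ℓ) = ∑ p, (m p - ℓ) :=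
      Finset.add_sum_erase Finset.univ (fun p => m p - ℓ) (Finset.mem_univ i)
    have e1 : ℓ * 1 + (m i - ℓ - 1) * 0 + ∑ p ∈ Finset.univ.erase i, (m p - ℓ) * 0 = ℓ := by
      simp
    have e2 : ℓ * 0 + (m i - ℓ - 1) * 1 + ∑ p ∈ Finset.univ.erase i, (m p - ℓ) * 1
        = (∑ p, (m p - ℓ)) - 1 := by
      simp only [mul_one, mul_zero, zero_add]
      set S1 := ∑ p ∈ Finset.univ.erase i, (m p - ℓ) with hS1
      set S2 := ∑ p : Fin b, (m p - ℓ) with hS2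
      omega
    rw [e1, e2] at h1
    exact h1
  -- Part 2: membership in I_{Z'}
  · rw [Ideal.mem_iInf]
    intro j
    by_cases hj : j = i
    · subst hj
      rw [if_pos rfl]
      have hLm : L ∈ Ideal.span {L, R j} := Ideal.subset_span (Set.mem_insert _ _)
      have hRm : R j ∈ Ideal.span {L, R j} :=
        Ideal.subset_span (Set.mem_insert_of_mem _ rfl)
      have key : L ^ ℓ * R j ^ (m j - ℓ - 1) ∈ (Ideal.span {L, R j}) ^ (m j - 1) := by
        have h2 := Ideal.mul_mem_mul (Ideal.pow_mem_pow hLm ℓ)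
          (Ideal.pow_mem_pow hRm (m j - ℓ - 1))
        rw [← pow_add] at h2
        have he : ℓ + (m j - ℓ - 1) = m j - 1 := by omega
        rwa [he] at h2
      exact Ideal.mul_mem_right _ _ key
    · rw [if_neg hj]
      have hjmem : j ∈ Finset.univ.erase i := Finset.mem_erase.mpr ⟨hj, Finset.mem_univ j⟩
      have hLm : L ∈ Ideal.span {L, R j} := Ideal.subset_span (Set.mem_insert _ _)
      have hRm : R j ∈ Ideal.span {L, R j} :=
        Ideal.subset_span (Set.mem_insert_of_mem _ rfl)
      have key : L ^ ℓ * R j ^ (m j - ℓ) ∈ (Ideal.span {L, R j}) ^ (m j) := by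
        have h2 := Ideal.mul_mem_mul (Ideal.pow_mem_pow hLm ℓ)
          (Ideal.pow_mem_pow hRm (m j - ℓ))
        rw [← pow_add] at h2
        exact Ideal.pow_le_pow_right (by omega) h2
      have hfe : L ^ ℓ * R i ^ (m i - ℓ - 1) * ∏ p ∈ Finset.univ.erase i, R p ^ (m p - ℓ)
          = (L ^ ℓ * R j ^ (m j - ℓ)) *
            (R i ^ (m i - ℓ - 1) * ∏ p ∈ (Finset.univ.erase i).erase j, R p ^ (m p - ℓ)) := by
        rw [← Finset.mul_prod_erase _ _ hjmem]; ring
      rw [hfe]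
      exact Ideal.mul_mem_right _ _ key
  -- Part 3: non-membership in I_Z
  · intro hmem
    have hFi : (L ^ ℓ * R i ^ (m i - ℓ - 1) * ∏ p ∈ Finset.univ.erase i, R p ^ (m p - ℓ))
        ∈ (Ideal.span {L, R i}) ^ (m i) := Ideal.mem_iInf.mp hmem i
    set α := coeff (Finsupp.single 0 1) L with hαdef
    set β := coeff (Finsupp.single 1 1) L with hβdef
    have hLrep : L = C α * X 0 + C β * X 1 := exists_lin_x hLdeg
    have hαβ : ¬(α = 0 ∧ β = 0) := by
      rintro ⟨ha, hbb⟩; apply hL0; rw [hLrep, ha, hbb]; simp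
    set γ : Fin b → k := fun j => coeff (Finsupp.single 2 1) (R j) with hγdef
    set δ : Fin b → k := fun j => coeff (Finsupp.single 3 1) (R j) with hδdef
    have hRrep : ∀ j, R j = C (γ j) * X 2 + C (δ j) * X 3 := fun j => exists_lin_y (hRdeg j)
    have hγδ : ∀ j, ¬(γ j = 0 ∧ δ j = 0) := by
      rintro j ⟨ha, hbb⟩; apply hR0 j; rw [hRrep j, ha, hbb]; simp
    obtain ⟨a, c, ea, fa, hac, -, -⟩ := exists_comp hαβ
    obtain ⟨a2, c2, e2, f2, h1, h0, hdet⟩ := exists_comp (hγδ i)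
    set g : Fin 4 → MvPolynomial (Fin 2) k :=
      ![C a * X 0, C c * X 0, C a2 * X 1 + C e2, C c2 * X 1 + C f2] with hgdef
    set φ : MvPolynomial (Fin 4) k →ₐ[k] MvPolynomial (Fin 2) k := aeval g with hφdef
    have hg0 : g 0 = C a * X 0 := rfl
    have hg1 : g 1 = C c * X 0 := rfl
    have hg2 : g 2 = C a2 * X 1 + C e2 := rfl
    have hg3 : g 3 = C c2 * X 1 + C f2 := rfl
    have hCalg : (algebraMap k (MvPolynomial (Fin 2) k)) = C := rfl
    have hφL : φ L = X 0 := by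
      rw [hLrep]
      simp only [hφdef, map_add, map_mul, aeval_C, aeval_X, hCalg, hg0, hg1]
      have : (C (α*a + β*c) : MvPolynomial (Fin 2) k) * X 0
          = C α * (C a * X 0) + C β * (C c * X 0) := by
        simp only [map_add, map_mul]; ring
      rw [← this, hac, map_one, one_mul]
    have hφR : ∀ j, φ (R j) = C (γ j * a2 + δ j * c2) * X 1 + C (γ j * e2 + δ j * f2) := by
      intro j
      rw [hRrep j]
      simp only [hφdef, map_add, map_mul, aeval_C, aeval_X, hCalg, hg2, hg3]
      ring
    have hφRi : φ (R i) = X 1 := by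
      rw [hφR i, h1, h0]; simp
    have hv : ∀ p, p ≠ i → γ p * e2 + δ p * f2 ≠ 0 := by
      intro p hp hzero
      obtain ⟨u, hu1, hu2⟩ := prop_of_const_zero h1 h0 hdet hzero
      refine (hRnp p i hp).1 u ?_
      rw [hRrep p, hRrep i, hu1, hu2, smul_eq_C_mul]
      simp only [map_mul]; ring
    -- map into k[s,t]
    have hmapped : φ (L ^ ℓ * R i ^ (m i - ℓ - 1) * ∏ p ∈ Finset.univ.erase i, R p ^ (m p - ℓ))
        ∈ ordIdeal k (m i) := by
      apply pow_le_ordIdeal (m i)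
      have h2 : φ (L ^ ℓ * R i ^ (m i - ℓ - 1) * ∏ p ∈ Finset.univ.erase i, R p ^ (m p - ℓ))
          ∈ Ideal.map (φ : MvPolynomial (Fin 4) k →+* MvPolynomial (Fin 2) k)
              ((Ideal.span {L, R i}) ^ m i) := Ideal.mem_map_of_mem _ hFi
      rw [Ideal.map_pow, Ideal.map_span, Set.image_insert_eq, Set.image_singleton] at h2
      have himg1 : (φ : MvPolynomial (Fin 4) k →+* MvPolynomial (Fin 2) k) L = X 0 := hφL
      have himg2 : (φ : MvPolynomial (Fin 4) k →+* MvPolynomial (Fin 2) k) (R i) = X 1 := hφRi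
      rwa [himg1, himg2] at h2
    set dd : Fin 2 →₀ ℕ := Finsupp.single 0 ℓ + Finsupp.single 1 (m i - ℓ - 1) with hdd
    set G : MvPolynomial (Fin 2) k :=
      ∏ p ∈ Finset.univ.erase i,
        (C (γ p * a2 + δ p * c2) * X 1 + C (γ p * e2 + δ p * f2)) ^ (m p - ℓ) with hG
    have hφF : φ (L ^ ℓ * R i ^ (m i - ℓ - 1) * ∏ p ∈ Finset.univ.erase i, R p ^ (m p - ℓ))
        = monomial dd 1 * G := by
      rw [map_mul, map_mul, map_prod, map_pow, map_pow, hφL, hφRi]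
      simp only [map_pow, hφR]
      rw [X_pow_eq_monomial, X_pow_eq_monomial, monomial_mul, mul_one, hdd, hG]
    have hcoeff : coeff dd (φ (L ^ ℓ * R i ^ (m i - ℓ - 1) *
        ∏ p ∈ Finset.univ.erase i, R p ^ (m p - ℓ)))
        = ∏ p ∈ Finset.univ.erase i, (γ p * e2 + δ p * f2) ^ (m p - ℓ) := by
      rw [hφF]
      have step : coeff (dd + 0) (monomial dd (1:k) * G) = 1 * coeff 0 G :=
        coeff_monomial_mul 0 dd 1 G
      rw [add_zero] at step
      rw [step, one_mul]
      have : coeff 0 G = constantCoeff G := rfl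
      rw [this, hG]
      rw [map_prod]
      refine Finset.prod_congr rfl fun p _ => ?_
      rw [map_pow]
      simp
    have hne : coeff dd (φ (L ^ ℓ * R i ^ (m i - ℓ - 1) *
        ∏ p ∈ Finset.univ.erase i, R p ^ (m p - ℓ))) ≠ 0 := by
      rw [hcoeff]
      exact Finset.prod_ne_zero_iff.mpr fun p hp =>
        pow_ne_zero _ (hv p (Finset.mem_erase.mp hp).1)
    have hd0 : dd 0 = ℓ := by simp [hdd, Finsupp.single_apply]
    have hd1 : dd 1 = m i - ℓ - 1 := by simp [hdd, Finsupp.single_apply]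
    have hle := hmapped dd (mem_support_iff.mpr hne)
    rw [hd0, hd1] at hle
    omega
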